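/- arXiv:0812.3619 — 3 statements merged into one kernel-verified Lean document; each statement's English description precedes it below -/
import Mathlib

section
/- Let I : ℝ^{d+1} → [0,∞] be convex, f(v,s) = s·I(v/s,1/s), and J(v) = inf_{0<s≤1} f(v,s). Suppose v₀, s₀ are such that J(v₀) = f(v₀,s₀), f is continuously differentiable in a neighborhood of (v₀,s₀), and ∂f/∂s(v₀,s₀) = 0. Then J is differentiable at v₀ in each coordinate direction with ∂J/∂v_i(v₀) = ∂f/∂v_i(v₀,s₀) = ∂I/∂x_i(v₀/s₀, 1/s₀). -/
noncomputable section
set_option maxHeartbeats 1000000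

/-- Let `I : ℝ^{d+1} → [0,∞)` be convex, `f(v,s) = s·I(v/s,1/s)`, and
`J(v) = inf_{0<s≤1} f(v,s)`. Suppose `v₀, s₀` are such that `J(v₀) = f(v₀,s₀)`, `f` is
continuously differentiable in a neighborhood of `(v₀,s₀)`, and `∂f/∂s(v₀,s₀) = 0`. Then `J` is
differentiable at `v₀` in each coordinate direction with
`∂J/∂v_i(v₀) = ∂f/∂v_i(v₀,s₀) = ∂I/∂x_i(v₀/s₀, 1/s₀)`. -/
theorem stmt_5 {d : ℕ}
    (I f : EuclideanSpace ℝ (Fin d) × ℝ → ℝ)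
    (J : EuclideanSpace ℝ (Fin d) → ℝ)
    (hIconv : ConvexOn ℝ Set.univ I) (hInonneg : ∀ p, 0 ≤ I p)
    (hf : ∀ (v : EuclideanSpace ℝ (Fin d)) (s : ℝ), s ≠ 0 → f (v, s) = s * I (s⁻¹ • v, s⁻¹))
    (hJ : ∀ v, J v = ⨅ s : Set.Ioc (0:ℝ) 1, f (v, (s : ℝ)))
    (v₀ : EuclideanSpace ℝ (Fin d)) (s₀ : ℝ) (hs₀ : s₀ ∈ Set.Ioc (0:ℝ) 1)
    (hmin : J v₀ = f (v₀, s₀))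
    (hfC1 : ContDiffAt ℝ 1 f (v₀, s₀))
    (hIC1 : ContDiffAt ℝ 1 I (s₀⁻¹ • v₀, s₀⁻¹))
    (hds : fderiv ℝ f (v₀, s₀) ((0 : EuclideanSpace ℝ (Fin d)), (1 : ℝ)) = 0) :
    ∀ i : Fin d,
      HasDerivAt (fun h : ℝ => J (v₀ + h • EuclideanSpace.single i 1))
        (fderiv ℝ I (s₀⁻¹ • v₀, s₀⁻¹) (EuclideanSpace.single i 1, (0 : ℝ))) 0 ∧
      fderiv ℝ f (v₀, s₀) (EuclideanSpace.single i 1, (0 : ℝ))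
        = fderiv ℝ I (s₀⁻¹ • v₀, s₀⁻¹) (EuclideanSpace.single i 1, (0 : ℝ)) := by
  intro i
  have hs₀pos : 0 < s₀ := hs₀.1
  have hs₀ne : s₀ ≠ 0 := ne_of_gt hs₀pos
  set e : EuclideanSpace ℝ (Fin d) := EuclideanSpace.single i 1 with he
  set q₀ : (EuclideanSpace ℝ (Fin d)) × ℝ := (s₀⁻¹ • v₀, s₀⁻¹) with hq₀
  set L := fderiv ℝ f (v₀, s₀) with hL
  set DI := fderiv ℝ I q₀ with hDI
  have hfd : HasFDerivAt f L (v₀, s₀) := (hfC1.differentiableAt one_ne_zero).hasFDerivAt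
  have hId : HasFDerivAt I DI q₀ := (hIC1.differentiableAt one_ne_zero).hasFDerivAt
  set c : ℝ := DI (e, 0) with hc
  -- step A: directional derivative of f at (v₀,s₀) along (e,0)
  have h1 : HasDerivAt (fun h : ℝ => v₀ + h • e) e 0 := by
    simpa using ((hasDerivAt_id (0:ℝ)).smul_const e).const_add v₀
  have hγ₁ : HasDerivAt (fun h : ℝ => ((v₀ + h • e, s₀) : (EuclideanSpace ℝ (Fin d)) × ℝ)) ((e, 0) : (EuclideanSpace ℝ (Fin d)) × ℝ) 0 :=
    h1.prodMk (hasDerivAt_const 0 s₀)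
  have stepA : HasDerivAt (fun h : ℝ => f (v₀ + h • e, s₀)) (L (e, 0)) 0 := by
    have := HasFDerivAt.comp_hasDerivAt (0:ℝ)
      (show HasFDerivAt f L ((v₀ + (0:ℝ) • e, s₀)) by simpa using hfd) hγ₁
    exact this
  -- step B: same directional derivative computed via I
  have h2 : HasDerivAt (fun h : ℝ => s₀⁻¹ • v₀ + h • (s₀⁻¹ • e)) (s₀⁻¹ • e) 0 := by
    simpa using ((hasDerivAt_id (0:ℝ)).smul_const (s₀⁻¹ • e)).const_add (s₀⁻¹ • v₀)
  have hγ₂ : HasDerivAt (fun h : ℝ => ((s₀⁻¹ • v₀ + h • (s₀⁻¹ • e), s₀⁻¹) : (EuclideanSpace ℝ (Fin d)) × ℝ))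
      ((s₀⁻¹ • e, 0) : (EuclideanSpace ℝ (Fin d)) × ℝ) 0 := h2.prodMk (hasDerivAt_const 0 s₀⁻¹)
  have hval : s₀ * DI (s₀⁻¹ • e, 0) = c := by
    have hpair : ((s₀⁻¹ • e, (0:ℝ)) : (EuclideanSpace ℝ (Fin d)) × ℝ) = s₀⁻¹ • ((e, (0:ℝ)) : (EuclideanSpace ℝ (Fin d)) × ℝ) := by
      simp [Prod.smul_def]
    rw [hpair, map_smul, smul_eq_mul, ← mul_assoc, mul_inv_cancel₀ hs₀ne, one_mul, hc]
  have stepB : HasDerivAt (fun h : ℝ => f (v₀ + h • e, s₀)) c 0 := by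
    have hcomp : HasDerivAt (fun h : ℝ => I ((s₀⁻¹ • v₀ + h • (s₀⁻¹ • e), s₀⁻¹) : (EuclideanSpace ℝ (Fin d)) × ℝ))
        (DI (s₀⁻¹ • e, 0)) 0 := by
      have := HasFDerivAt.comp_hasDerivAt (0:ℝ)
        (show HasFDerivAt I DI ((s₀⁻¹ • v₀ + (0:ℝ) • (s₀⁻¹ • e), s₀⁻¹)) by simpa using hId) hγ₂
      exact this
    have hmul : HasDerivAt (fun h : ℝ => s₀ * I ((s₀⁻¹ • v₀ + h • (s₀⁻¹ • e), s₀⁻¹) : (EuclideanSpace ℝ (Fin d)) × ℝ))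
        (s₀ * DI (s₀⁻¹ • e, 0)) 0 := hcomp.const_mul s₀
    rw [hval] at hmul
    convert hmul using 2 with h
    rw [hf _ s₀ hs₀ne]
    congr 2
    rw [smul_add, smul_comm]
  have hLc : L (e, 0) = c := stepA.unique stepB
  -- convexity of f on {s > 0}
  have conv2 : ∀ (p q : (EuclideanSpace ℝ (Fin d)) × ℝ), 0 < p.2 → 0 < q.2 → ∀ a b : ℝ, 0 ≤ a → 0 ≤ b → a + b = 1 →
      f (a • p + b • q) ≤ a * f p + b * f q := by
    intro p q hp hq a b ha hb hab
    rcases eq_or_lt_of_le ha with rfl | ha'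
    · have hb1 : b = 1 := by linarith
      subst hb1; simp
    rcases eq_or_lt_of_le hb with rfl | hb'
    · have ha1 : a = 1 := by linarith
      subst ha1; simp
    have hS : 0 < a * p.2 + b * q.2 := by positivity
    set S := a * p.2 + b * q.2 with hSdef
    have hSne : S ≠ 0 := ne_of_gt hS
    set lam := a * p.2 / S with hlam
    set mu := b * q.2 / S with hmu
    have hlam0 : 0 ≤ lam := by positivity
    have hmu0 : 0 ≤ mu := by positivity
    have hlm : lam + mu = 1 := by rw [hlam, hmu, ← add_div]; exact div_self hSne
    set x : (EuclideanSpace ℝ (Fin d)) × ℝ := (p.2⁻¹ • p.1, p.2⁻¹) with hx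
    set y : (EuclideanSpace ℝ (Fin d)) × ℝ := (q.2⁻¹ • q.1, q.2⁻¹) with hy
    have hp2 : p.2 ≠ 0 := ne_of_gt hp
    have hq2 : q.2 ≠ 0 := ne_of_gt hq
    have e1 : lam * p.2⁻¹ = S⁻¹ * a := by rw [hlam]; field_simp
    have e2 : mu * q.2⁻¹ = S⁻¹ * b := by rw [hmu]; field_simp
    have harg : ((S⁻¹ • (a • p.1 + b • q.1), S⁻¹) : (EuclideanSpace ℝ (Fin d)) × ℝ) = lam • x + mu • y := by
      refine Prod.ext ?_ ?_
      · show S⁻¹ • (a • p.1 + b • q.1) = lam • (p.2⁻¹ • p.1) + mu • (q.2⁻¹ • q.1)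
        rw [smul_add, smul_smul, smul_smul, smul_smul, smul_smul, e1, e2]
      · show S⁻¹ = lam * p.2⁻¹ + mu * q.2⁻¹
        rw [e1, e2, ← mul_add, hab, mul_one]
    have hIneq := hIconv.2 (Set.mem_univ x) (Set.mem_univ y) hlam0 hmu0 hlm
    have hcomb : a • p + b • q = ((a • p.1 + b • q.1, S) : (EuclideanSpace ℝ (Fin d)) × ℝ) := by
      refine Prod.ext ?_ ?_ <;> simp [hSdef, Prod.smul_def]
    rw [hcomb, hf _ S hSne, harg]
    have hfp : f p = p.2 * I x := by
      rw [← Prod.mk.eta (p := p), hf p.1 p.2 (ne_of_gt hp)]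
    have hfq : f q = q.2 * I y := by
      rw [← Prod.mk.eta (p := q), hf q.1 q.2 (ne_of_gt hq)]
    rw [hfp, hfq]
    calc S * I (lam • x + mu • y) ≤ S * (lam * I x + mu * I y) := by
          apply mul_le_mul_of_nonneg_left hIneq (le_of_lt hS)
      _ = a * (p.2 * I x) + b * (q.2 * I y) := by
          have e3 : S * lam = a * p.2 := by rw [hlam]; field_simp
          have e4 : S * mu = b * q.2 := by rw [hmu]; field_simp
          rw [mul_add, ← mul_assoc, ← mul_assoc, e3, e4]; ring
  -- gradient inequality from convexity
  have key : ∀ p : (EuclideanSpace ℝ (Fin d)) × ℝ, 0 < p.2 → f (v₀, s₀) + L (p - (v₀, s₀)) ≤ f p := by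
    intro p hp
    set u : (EuclideanSpace ℝ (Fin d)) × ℝ := p - (v₀, s₀) with hu
    have hγ : HasDerivAt (fun t : ℝ => ((v₀, s₀) : (EuclideanSpace ℝ (Fin d)) × ℝ) + t • u) u 0 := by
      simpa using ((hasDerivAt_id (0:ℝ)).smul_const u).const_add ((v₀, s₀) : (EuclideanSpace ℝ (Fin d)) × ℝ)
    have hφ : HasDerivAt (fun t : ℝ => f (((v₀, s₀) : (EuclideanSpace ℝ (Fin d)) × ℝ) + t • u)) (L u) 0 := by
      have := HasFDerivAt.comp_hasDerivAt (0:ℝ)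
        (show HasFDerivAt f L (((v₀, s₀) : (EuclideanSpace ℝ (Fin d)) × ℝ) + (0:ℝ) • u) by simpa using hfd) hγ
      exact this
    have hslope : ∀ t ∈ Set.Ioc (0:ℝ) 1,
        (f (((v₀, s₀) : (EuclideanSpace ℝ (Fin d)) × ℝ) + t • u) - f (v₀, s₀)) / t ≤ f p - f (v₀, s₀) := by
      intro t ht
      have hcv := conv2 ((v₀, s₀) : (EuclideanSpace ℝ (Fin d)) × ℝ) p hs₀pos hp (1 - t) t (by linarith [ht.2]) (le_of_lt ht.1) (by ring)
      have hpt : (1 - t) • ((v₀, s₀) : (EuclideanSpace ℝ (Fin d)) × ℝ) + t • p = ((v₀, s₀) : (EuclideanSpace ℝ (Fin d)) × ℝ) + t • u := by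
        rw [hu, smul_sub, sub_smul, one_smul]
        abel
      rw [hpt] at hcv
      rw [div_le_iff₀ ht.1]
      have hr : (1 - t) * f (v₀, s₀) + t * f p
          = f (v₀, s₀) + (f p - f (v₀, s₀)) * t := by ring
      linarith
    have htend : Filter.Tendsto (fun t : ℝ => (f (((v₀, s₀) : (EuclideanSpace ℝ (Fin d)) × ℝ) + t • u) - f (v₀, s₀)) / t)
        (nhdsWithin 0 (Set.Ioi 0)) (nhds (L u)) := by
      have h0 := hasDerivAt_iff_tendsto_slope.mp hφ
      have hmono : nhdsWithin (0:ℝ) (Set.Ioi 0) ≤ nhdsWithin 0 {(0:ℝ)}ᶜ :=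
        nhdsWithin_mono 0 (fun t ht => ne_of_gt ht)
      have := h0.mono_left hmono
      refine this.congr fun t => ?_
      simp [slope_def_field]
    have hLle : L u ≤ f p - f (v₀, s₀) := by
      refine le_of_tendsto htend ?_
      filter_upwards [Ioc_mem_nhdsGT_of_mem (Set.mem_Ico.mpr ⟨le_rfl, one_pos⟩)] with t ht
      exact hslope t ht
    linarith
  -- lower bound for J
  have lower : ∀ h : ℝ, ∀ s ∈ Set.Ioc (0:ℝ) 1, f (v₀, s₀) + h * c ≤ f (v₀ + h • e, s) := by
    intro h s hs
    have hk := key ((v₀ + h • e, s) : (EuclideanSpace ℝ (Fin d)) × ℝ) hs.1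
    have hsplit : (((v₀ + h • e, s) : (EuclideanSpace ℝ (Fin d)) × ℝ) - (v₀, s₀)) =
        h • ((e, (0:ℝ)) : (EuclideanSpace ℝ (Fin d)) × ℝ) + (s - s₀) • (((0 : EuclideanSpace ℝ (Fin d)), (1:ℝ)) : (EuclideanSpace ℝ (Fin d)) × ℝ) := by
      refine Prod.ext ?_ ?_ <;> simp [Prod.smul_def]
    rw [hsplit, map_add, map_smul, map_smul, hds, hLc] at hk
    simpa using hk
  haveI : Nonempty (Set.Ioc (0:ℝ) 1) := ⟨⟨s₀, hs₀⟩⟩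
  have hψge : ∀ h : ℝ, f (v₀, s₀) + h * c ≤ J (v₀ + h • e) := by
    intro h
    rw [hJ]
    exact le_ciInf fun s => lower h s s.2
  have hψle : ∀ h : ℝ, J (v₀ + h • e) ≤ f (v₀ + h • e, s₀) := by
    intro h
    rw [hJ]
    have hbdd : BddBelow (Set.range fun s : Set.Ioc (0:ℝ) 1 => f (v₀ + h • e, (s : ℝ))) := by
      refine ⟨f (v₀, s₀) + h * c, ?_⟩
      rintro x ⟨s, rfl⟩
      exact lower h s s.2
    exact ciInf_le hbdd ⟨s₀, hs₀⟩
  have hψ0 : J (v₀ + (0:ℝ) • e) = f (v₀, s₀) := by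
    simp [hmin]
  constructor
  · rw [hasDerivAt_iff_isLittleO]
    have hβo := hasDerivAt_iff_isLittleO.mp stepB
    refine Asymptotics.IsBigO.trans_isLittleO ?_ hβo
    apply Asymptotics.isBigO_of_le
    intro h
    simp only [sub_zero, smul_eq_mul, Real.norm_eq_abs]
    have h1 := hψge h
    have h2 := hψle h
    have hβ0 : f (v₀ + (0:ℝ) • e, s₀) = f (v₀, s₀) := by norm_num
    rw [hψ0, hβ0]
    have hA0 : 0 ≤ J (v₀ + h • e) - f (v₀, s₀) - h * c := by linarith
    have hAB : J (v₀ + h • e) - f (v₀, s₀) - h * c ≤ f (v₀ + h • e, s₀) - f (v₀, s₀) - h * c := by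
      linarith
    rw [abs_of_nonneg hA0]
    exact hAB.trans (le_abs_self _)
  · exact hLc
end
end

section
/- Let Λ : ℝ^d × ℝ → (−∞,∞] be convex with Λ(η,λ) = +∞ for all λ > 0, and let I be its Legendre transform. Fix (η₀, 0) in the domain of Λ where Λ is differentiable, with ∇Λ(η₀,0) = (x, h). Then I(x,t) = I(x,h) = x·η₀ − Λ_X(η₀) for all t ≥ h, where Λ_X(η) := Λ(η,0). In particular t ↦ I(x,t) is constant on [h,∞) and equals I₁(x), the Legendre transform of Λ_X, provided I₁(x) ≤ inf_t I(x,t). -/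
noncomputable section

open Set

/-- Subgradient inequality for a convex function differentiable within a set. -/
lemma subgrad_ineq {E : Type*} [NormedAddCommGroup E] [NormedSpace ℝ E]
    {s : Set E} {f : E → ℝ} (hf : ConvexOn ℝ s f) {a b : E}
    (ha : a ∈ s) (hb : b ∈ s) {L : E →L[ℝ] ℝ}
    (hL : HasFDerivWithinAt f L s a) : f a + L (b - a) ≤ f b := by
  rcases eq_or_ne b a with rfl | hne
  · simp
  set ℓ : ℝ → E := fun τ => a + τ • (b - a) with hℓ
  have hmap : ∀ τ ∈ ℓ ⁻¹' s, ℓ τ ∈ s := fun τ hτ => hτ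
  have hconvpre : Convex ℝ (ℓ ⁻¹' s) := by
    intro u hu v hv p q hp hq hpq
    have : ℓ (p*u + q*v) = p • ℓ u + q • ℓ v := by
      simp only [hℓ]
      match_scalars <;> linarith
    simpa [Set.mem_preimage, this] using hf.1 hu hv hp hq hpq
  have hg : ConvexOn ℝ (ℓ ⁻¹' s) (f ∘ ℓ) := by
    refine ⟨hconvpre, fun u hu v hv p q hp hq hpq => ?_⟩
    have : ℓ (p*u + q*v) = p • ℓ u + q • ℓ v := by simp only [hℓ]; match_scalars <;> linarith
    simpa [Function.comp, this, smul_eq_mul] using hf.2 hu hv hp hq hpq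
  have h0 : (0:ℝ) ∈ ℓ ⁻¹' s := by simpa [hℓ] using ha
  have h1 : (1:ℝ) ∈ ℓ ⁻¹' s := by simpa [hℓ] using hb
  have hlder : ∀ τ : ℝ, HasDerivWithinAt ℓ (b - a) (ℓ ⁻¹' s) τ := by
    intro τ
    have : HasDerivAt ℓ (b - a) τ := by
      simpa only [one_smul, hℓ, id] using ((hasDerivAt_id τ).smul_const (b - a)).const_add a
    exact this.hasDerivWithinAt
  have hgder : HasDerivWithinAt (f ∘ ℓ) (L (b - a)) (ℓ ⁻¹' s) 0 := by
    have hL0 : HasFDerivWithinAt f L s (ℓ 0) := by simpa [hℓ] using hL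
    have := hL0.comp_hasDerivWithinAt (x := (0:ℝ)) (hlder 0) hmap
    simpa [hℓ] using this
  have hsl := hg.le_slope_of_hasDerivWithinAt h0 h1 one_pos hgder
  have : slope (f ∘ ℓ) 0 1 = f b - f a := by
    simp [slope, hℓ, Function.comp]
  rw [this] at hsl
  linarith

/-- Let `Λ : ℝ^d × ℝ → (−∞,∞]` be convex with `Λ(η,λ) = +∞` for all `λ > 0`
(encoded by restricting all data to the half-space `λ ≤ 0`), and let `I` be its Legendre
transform, `I(x,t) = sup_{η, λ≤0} ((x,t)·(η,λ) − Λ(η,λ))`. Fix `(η₀,0)` in the domain of `Λ`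
where `Λ` is differentiable (within the half-space), with `∇Λ(η₀,0) = (x,h)`. Then
`I(x,t) = I(x,h) = x·η₀ − Λ_X(η₀)` for all `t ≥ h`, where `Λ_X(η) = Λ(η,0)`; in particular
`t ↦ I(x,t)` is constant on `[h,∞)` and equals `I₁(x)`, the Legendre transform of `Λ_X`,
provided `I₁ ≤ inf_t I(·,t)`. -/
theorem stmt_13 {d : ℕ}
    (Λ : EuclideanSpace ℝ (Fin d) → ℝ → ℝ)
    (hΛconv : ConvexOn ℝ {p : EuclideanSpace ℝ (Fin d) × ℝ | p.2 ≤ 0}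
      (fun p => Λ p.1 p.2))
    (η₀ x : EuclideanSpace ℝ (Fin d)) (h : ℝ)
    (L : (EuclideanSpace ℝ (Fin d) × ℝ) →L[ℝ] ℝ)
    (hL : ∀ p : EuclideanSpace ℝ (Fin d) × ℝ, L p = (inner ℝ x p.1 : ℝ) + h * p.2)
    (hder : HasFDerivWithinAt (fun p : EuclideanSpace ℝ (Fin d) × ℝ => Λ p.1 p.2) L
      {p : EuclideanSpace ℝ (Fin d) × ℝ | p.2 ≤ 0} (η₀, (0 : ℝ)))
    (I : EuclideanSpace ℝ (Fin d) × ℝ → ℝ)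
    (hI : ∀ (y : EuclideanSpace ℝ (Fin d)) (t : ℝ),
      I (y, t) = ⨆ p : EuclideanSpace ℝ (Fin d) × {l : ℝ // l ≤ 0},
        ((inner ℝ p.1 y : ℝ) + (p.2 : ℝ) * t - Λ p.1 (p.2 : ℝ)))
    (I₁ : EuclideanSpace ℝ (Fin d) → ℝ)
    (hI₁ : ∀ y, I₁ y = ⨆ η : EuclideanSpace ℝ (Fin d), ((inner ℝ η y : ℝ) - Λ η 0))
    (hI₁le : ∀ (y : EuclideanSpace ℝ (Fin d)) (t : ℝ), I₁ y ≤ I (y, t)) :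
    ∀ t : ℝ, h ≤ t →
      I (x, t) = I (x, h) ∧
      I (x, t) = (inner ℝ η₀ x : ℝ) - Λ η₀ 0 ∧
      I (x, t) = I₁ x := by
  haveI : Nonempty {l : ℝ // l ≤ 0} := ⟨⟨0, le_refl 0⟩⟩
  set c : ℝ := (inner ℝ η₀ x : ℝ) - Λ η₀ 0 with hc
  have ha0 : ((η₀, (0:ℝ)) : EuclideanSpace ℝ (Fin d) × ℝ) ∈
      {p : EuclideanSpace ℝ (Fin d) × ℝ | p.2 ≤ 0} := by simp [Set.mem_setOf_eq]
  -- subgradient bound for any (η, λ) with λ ≤ 0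
  have key : ∀ (η : EuclideanSpace ℝ (Fin d)) (l : ℝ), l ≤ 0 →
      Λ η₀ 0 + ((inner ℝ x η : ℝ) - (inner ℝ x η₀ : ℝ) + h * l) ≤ Λ η l := by
    intro η l hl
    have hb : ((η, l) : EuclideanSpace ℝ (Fin d) × ℝ) ∈
        {p : EuclideanSpace ℝ (Fin d) × ℝ | p.2 ≤ 0} := by simpa [Set.mem_setOf_eq] using hl
    have := subgrad_ineq hΛconv ha0 hb hder
    have hLval : L ((η, l) - (η₀, (0:ℝ))) =
        (inner ℝ x η : ℝ) - (inner ℝ x η₀ : ℝ) + h * l := by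
      rw [hL]
      simp [inner_sub_right]
    rw [hLval] at this
    exact this
  -- uniform upper bound on the terms of the sup defining I(x,t), for t ≥ h
  have hbound : ∀ (t : ℝ), h ≤ t →
      ∀ p : EuclideanSpace ℝ (Fin d) × {l : ℝ // l ≤ 0},
        (inner ℝ p.1 x : ℝ) + (p.2 : ℝ) * t - Λ p.1 (p.2 : ℝ) ≤ c := by
    intro t ht p
    have hk := key p.1 (p.2 : ℝ) p.2.2
    have hsym : (inner ℝ p.1 x : ℝ) = (inner ℝ x p.1 : ℝ) := real_inner_comm _ _
    have hsym0 : (inner ℝ η₀ x : ℝ) = (inner ℝ x η₀ : ℝ) := real_inner_comm _ _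
    have hneg : (p.2 : ℝ) * (t - h) ≤ 0 :=
      mul_nonpos_of_nonpos_of_nonneg p.2.2 (by linarith)
    nlinarith [hk, hneg]
  -- value of I(x,t) for t ≥ h
  have Ieq : ∀ t : ℝ, h ≤ t → I (x, t) = c := by
    intro t ht
    rw [hI x t]
    refine le_antisymm (ciSup_le (hbound t ht)) ?_
    have hba : BddAbove (Set.range fun p : EuclideanSpace ℝ (Fin d) × {l : ℝ // l ≤ 0} =>
        (inner ℝ p.1 x : ℝ) + (p.2 : ℝ) * t - Λ p.1 (p.2 : ℝ)) :=
      ⟨c, by rintro y ⟨p, rfl⟩; exact hbound t ht p⟩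
    have := le_ciSup hba ((η₀, ⟨0, le_refl 0⟩) :
      EuclideanSpace ℝ (Fin d) × {l : ℝ // l ≤ 0})
    simpa [hc] using this
  -- I₁ x = c
  have hI₁eq : I₁ x = c := by
    refine le_antisymm ?_ ?_
    · have := hI₁le x h
      rwa [Ieq h le_rfl] at this
    · rw [hI₁ x]
      have hb1 : ∀ η : EuclideanSpace ℝ (Fin d), (inner ℝ η x : ℝ) - Λ η 0 ≤ c := by
        intro η
        have hk := key η 0 le_rfl
        have hsym : (inner ℝ η x : ℝ) = (inner ℝ x η : ℝ) := real_inner_comm _ _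
        have hsym0 : (inner ℝ η₀ x : ℝ) = (inner ℝ x η₀ : ℝ) := real_inner_comm _ _
        nlinarith [hk]
      have hba : BddAbove (Set.range fun η : EuclideanSpace ℝ (Fin d) =>
          (inner ℝ η x : ℝ) - Λ η 0) := ⟨c, by rintro y ⟨η, rfl⟩; exact hb1 η⟩
      have := le_ciSup hba η₀
      simpa [hc] using this
  intro t ht
  refine ⟨?_, ?_, ?_⟩
  · rw [Ieq t ht, Ieq h le_rfl]
  · rw [Ieq t ht]
  · rw [Ieq t ht, hI₁eq]
end
end

section
/- Let Λ : ℝ^{d+1} → ℝ be strictly convex and real-analytic on an open set, and suppose λ : C → ℝ (C ⊆ ℝ^d open) satisfies Λ(η, λ(η)) = 0 on C. Then λ is strictly concave on C, and consequently the map η ↦ −∇λ(η) is injective on C. -/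
noncomputable section

open Set

/-- Key gradient inequality: for a strictly concave differentiable function,
`f y - f x < f'(x)(y - x)`. -/
lemma strictConcave_fderiv_gt {d : ℕ} {C : Set (EuclideanSpace ℝ (Fin d))}
    {lf : EuclideanSpace ℝ (Fin d) → ℝ} (hconc : StrictConcaveOn ℝ C lf)
    {x y : EuclideanSpace ℝ (Fin d)} (hx : x ∈ C) (hy : y ∈ C) (hxy : x ≠ y)
    (hdx : DifferentiableAt ℝ lf x) :
    lf y - lf x < fderiv ℝ lf x (y - x) := by
  set v := y - x with hv
  have hvne : v ≠ 0 := sub_ne_zero.mpr (Ne.symm hxy)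
  set g : ℝ → ℝ := fun t => lf (x + t • v) with hg
  have hpt : ∀ t ∈ Icc (0:ℝ) 1, x + t • v ∈ C := by
    intro t ht
    have he : x + t • v = (1 - t) • x + t • y := by
      simp only [hv]; module
    rw [he]
    exact hconc.1 hx hy (by linarith [ht.2]) ht.1 (by ring)
  -- strict concavity of g on Icc 0 1
  have hgconc : StrictConcaveOn ℝ (Icc (0:ℝ) 1) g := by
    refine ⟨convex_Icc 0 1, fun s hs t ht hst a b ha hb hab => ?_⟩
    have hkey : x + (a * s + b * t) • v = a • (x + s • v) + b • (x + t • v) := by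
      have h1 : (a:ℝ) + b = 1 := hab
      match_scalars <;> simp <;> nlinarith [h1]
    have hne : x + s • v ≠ x + t • v := by
      intro h
      apply hst
      have : (s - t) • v = 0 := by
        have := sub_eq_zero.mpr h
        rw [sub_smul]
        abel_nf
        abel_nf at this
        linear_combination (norm := module) this
      rcases smul_eq_zero.mp this with h' | h'
      · linarith [sub_eq_zero.mp (by linarith [h'] : s - t = 0)]
      · exact absurd h' hvne
    have := hconc.2 (hpt s hs) (hpt t ht) hne ha hb hab
    simp only [hg, smul_eq_mul]
    calc a * lf (x + s • v) + b * lf (x + t • v)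
        < lf (a • (x + s • v) + b • (x + t • v)) := by
          simpa [smul_eq_mul] using this
      _ = lf (x + (a * s + b * t) • v) := by rw [hkey]
  -- derivative of g at 0
  have hm : HasDerivAt (fun t : ℝ => x + t • v) v 0 := by
    simpa using (((hasDerivAt_id (0:ℝ)).smul_const v).const_add x)
  have hg0 : HasDerivAt g (fderiv ℝ lf x v) 0 := by
    have hdx' : HasFDerivAt lf (fderiv ℝ lf x) (x + (0:ℝ) • v) := by
      simpa using hdx.hasFDerivAt
    exact hdx'.comp_hasDerivAt (0:ℝ) hm
  have := hgconc.slope_lt_of_hasDerivAt (left_mem_Icc.mpr zero_le_one)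
    (right_mem_Icc.mpr zero_le_one) zero_lt_one hg0
  have hslope : slope g 0 1 = lf y - lf x := by
    simp [slope_def_field, hg, hv]
  rw [hslope] at this
  exact this

/-- Let `Λ : ℝ^{d+1} → ℝ` be strictly convex and differentiable on an open
convex set `V` containing the graph of `λ : C → ℝ` (`C ⊆ ℝ^d` open and convex), with
`∂Λ/∂λ > 0` on `V`, and suppose `Λ(η, λ(η)) = 0` on `C`. Then `λ` is strictly concave on `C`,
and consequently the map `η ↦ −∇λ(η)` is injective on `C`. -/
theorem stmt_19 {d : ℕ}
    (Λ : EuclideanSpace ℝ (Fin d) × ℝ → ℝ)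
    (V : Set (EuclideanSpace ℝ (Fin d) × ℝ)) (hV : IsOpen V) (hVconv : Convex ℝ V)
    (hΛstrict : StrictConvexOn ℝ V Λ) (hΛdiff : DifferentiableOn ℝ Λ V)
    (hΛanal : AnalyticOn ℝ Λ V)
    (hΛlam : ∀ p ∈ V, 0 < fderiv ℝ Λ p ((0 : EuclideanSpace ℝ (Fin d)), (1 : ℝ)))
    (C : Set (EuclideanSpace ℝ (Fin d))) (hC : IsOpen C) (hCconv : Convex ℝ C)
    (lf : EuclideanSpace ℝ (Fin d) → ℝ)
    (hgraph : ∀ η ∈ C, (η, lf η) ∈ V)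
    (hzero : ∀ η ∈ C, Λ (η, lf η) = 0)
    (hlfdiff : ∀ η ∈ C, DifferentiableAt ℝ lf η) :
    StrictConcaveOn ℝ C lf ∧
    Set.InjOn (fun η => -gradient lf η) C := by
  have hconc : StrictConcaveOn ℝ C lf := by
    refine ⟨hCconv, fun x hx y hy hxy a b ha hb hab => ?_⟩
    set z := a • x + b • y with hz
    have hzC : z ∈ C := hCconv hx hy ha.le hb.le hab
    set s : ℝ := a * lf x + b * lf y with hs
    -- (z, s) ∈ V
    have hpV : (z, s) ∈ V := by
      have := hVconv (hgraph x hx) (hgraph y hy) ha.le hb.le hab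
      simpa [Prod.ext_iff, hz, hs, smul_eq_mul] using this
    -- Λ (z, s) < 0
    have hΛneg : Λ (z, s) < 0 := by
      have hne : (x, lf x) ≠ (y, lf y) := fun h => hxy (congrArg Prod.fst h)
      have := hΛstrict.2 (hgraph x hx) (hgraph y hy) hne ha hb hab
      have he : a • (x, lf x) + b • (y, lf y) = (z, s) := by
        simp [Prod.ext_iff, hz, hs, smul_eq_mul]
      rw [he, hzero x hx, hzero y hy] at this
      simpa using this
    -- goal: s < lf z
    show a • lf x + b • lf y < lf z
    simp only [smul_eq_mul, ← hs]
    by_contra hcon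
    push_neg at hcon
    rcases eq_or_lt_of_le hcon with heq | hlt
    · rw [← heq, hzero z hzC] at hΛneg; exact lt_irrefl 0 hΛneg
    · -- Λ(z, ·) strictly increasing on [lf z, s] but Λ(z,lf z)=0 > Λ(z,s)
      set G : ℝ → ℝ := fun t => Λ (z, t) with hG
      have hmemV : ∀ t ∈ Icc (lf z) s, (z, t) ∈ V := by
        intro t ht
        have hconvt : Convex ℝ {t : ℝ | (z, t) ∈ V} := by
          intro t1 ht1 t2 ht2 a' b' ha' hb' hab'
          have he : a' • ((z, t1) : EuclideanSpace ℝ (Fin d) × ℝ) + b' • (z, t2)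
              = (z, a' • t1 + b' • t2) := by
            simp [Prod.ext_iff, smul_eq_mul, ← add_smul, hab']
          have := hVconv ht1 ht2 ha' hb' hab'
          rw [he] at this
          exact this
        have h0 : lf z ∈ {t : ℝ | (z, t) ∈ V} := hgraph z hzC
        have h1 : s ∈ {t : ℝ | (z, t) ∈ V} := hpV
        exact hconvt.ordConnected.out h0 h1 ht
      have hGd : ∀ t ∈ Icc (lf z) s, HasDerivAt G
          (fderiv ℝ Λ (z, t) ((0 : EuclideanSpace ℝ (Fin d)), (1 : ℝ))) t := by
        intro t ht
        have hmV := hmemV t ht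
        have hA : HasFDerivAt Λ (fderiv ℝ Λ (z, t)) (z, t) :=
          (hΛdiff.differentiableAt (hV.mem_nhds hmV)).hasFDerivAt
        have hmm : HasDerivAt (fun u : ℝ => (z, u))
            ((0 : EuclideanSpace ℝ (Fin d)), (1 : ℝ)) t :=
          HasDerivAt.prodMk (hasDerivAt_const t z) (hasDerivAt_id t)
        exact hA.comp_hasDerivAt t hmm
      have hmono : StrictMonoOn G (Icc (lf z) s) := by
        apply strictMonoOn_of_deriv_pos (convex_Icc _ _)
        · intro t ht
          exact ((hGd t ht).differentiableAt).continuousAt.continuousWithinAt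
        · intro t ht
          rw [interior_Icc] at ht
          have ht' : t ∈ Icc (lf z) s := ⟨ht.1.le, ht.2.le⟩
          rw [(hGd t ht').deriv]
          exact hΛlam _ (hmemV t ht')
      have := hmono (left_mem_Icc.mpr hcon) (right_mem_Icc.mpr hcon) hlt
      rw [hG] at this
      simp only [hzero z hzC] at this
      exact absurd (this.trans hΛneg) (lt_irrefl 0)
  refine ⟨hconc, fun x hx y hy hh => ?_⟩
  by_contra hxy
  have hgg : gradient lf x = gradient lf y := by
    have := hh
    simp only [neg_inj] at this
    exact this
  have hfd : ∀ {u : EuclideanSpace ℝ (Fin d)}, u ∈ C →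
      ∀ w, fderiv ℝ lf u w = inner ℝ (gradient lf u) w := by
    intro u hu w
    have h1 : HasFDerivAt lf
        ((InnerProductSpace.toDual ℝ _ (gradient lf u) : _ →L[ℝ] ℝ)) u :=
      hasGradientAt_iff_hasFDerivAt.mp (hlfdiff u hu).hasGradientAt
    rw [h1.fderiv]
    simp [InnerProductSpace.toDual_apply_apply]
  have h1 : lf y - lf x < fderiv ℝ lf x (y - x) :=
    strictConcave_fderiv_gt hconc hx hy hxy (hlfdiff x hx)
  have h2 : lf x - lf y < fderiv ℝ lf y (x - y) :=
    strictConcave_fderiv_gt hconc hy hx (Ne.symm hxy) (hlfdiff y hy)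
  rw [hfd hx] at h1
  rw [hfd hy, ← hgg] at h2
  have : inner (𝕜 := ℝ) (gradient lf x) (x - y)
      = - inner (𝕜 := ℝ) (gradient lf x) (y - x) := by
    rw [← inner_neg_right]; congr 1; abel
  rw [this] at h2
  linarith
end
end
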